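/- Let θ > 0, z_c = θ/2, and parametrize z(r) = z_c + r(-1+i) for r ≥ 0. With G(z) = log Γ(z) - log Γ(θ-z) - 2Ψ(z_c)z, one has d/dr Re(G(z(r))) ≤ -2r²/(1 + z_c + 2r)² for all r > 0. -/

import Mathlib

noncomputable def digamma (z : ℝ) : ℝ :=
  -Real.eulerMascheroniConstant + ∑' n : ℕ, (1 / (n + 1) - 1 / (n + z))

open Filter Topology Finset Nat

namespace Stmt8

/-- the path `z(x) = c - x + x i` -/
noncomputable def zz (c x : ℝ) : ℂ := (c : ℂ) + (x : ℂ) * (-1 + Complex.I)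

noncomputable def dd1 (c : ℝ) (j : ℕ) (x : ℝ) : ℝ := (c + j - x) ^ 2 + x ^ 2
noncomputable def dd2 (c : ℝ) (j : ℕ) (x : ℝ) : ℝ := (c + j + x) ^ 2 + x ^ 2

noncomputable def tt (c : ℝ) (j : ℕ) (x : ℝ) : ℝ :=
  (c + j - 2 * x) / dd1 c j x + (c + j + 2 * x) / dd2 c j x - 2 / (c + j)

noncomputable def TT (c x : ℝ) : ℝ := ∑' j : ℕ, tt c j x

/-- log of abs of GammaSeq-type expression -/
noncomputable def LL (w : ℂ) (n : ℕ) : ℝ :=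
  w.re * Real.log n + Real.log (n !) - ∑ j ∈ Finset.range (n + 1), Real.log (‖w + j‖)

noncomputable def FF (c ψ : ℝ) (n : ℕ) (x : ℝ) : ℝ :=
  (-2 * x) * Real.log n
    - (∑ j ∈ Finset.range (n + 1), (Real.log (dd1 c j x) - Real.log (dd2 c j x)) / 2)
    - 2 * ψ * (c - x)

noncomputable def ee (c ψ : ℝ) (n : ℕ) : ℝ :=
  2 * (∑ j ∈ Finset.range (n + 1), 1 / (c + j)) - 2 * Real.log n + 2 * ψ

noncomputable def AA (c ψ : ℝ) (n : ℕ) (x : ℝ) : ℝ :=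
  (∑ j ∈ Finset.range (n + 1), tt c j x) + ee c ψ n

variable {c x : ℝ}

lemma zz_re (c x : ℝ) : (zz c x).re = c - x := by
  simp [zz]; ring

lemma zz_im (c x : ℝ) : (zz c x).im = x := by
  simp [zz]

lemma dd1_pos (hc : 0 < c) (j : ℕ) (x : ℝ) : 0 < dd1 c j x := by
  rcases eq_or_ne x 0 with h | h
  · have : (0:ℝ) < c + j := by positivity
    simp only [dd1, h]
    nlinarith
  · have : (0:ℝ) < x ^ 2 := by positivity
    have : (0:ℝ) ≤ (c + j - x) ^ 2 := sq_nonneg _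
    simp only [dd1]; nlinarith

lemma dd2_pos (hc : 0 < c) (j : ℕ) (x : ℝ) : 0 < dd2 c j x := by
  rcases eq_or_ne x 0 with h | h
  · have : (0:ℝ) < c + j := by positivity
    simp only [dd2, h]
    nlinarith
  · have : (0:ℝ) < x ^ 2 := by positivity
    have : (0:ℝ) ≤ (c + j + x) ^ 2 := sq_nonneg _
    simp only [dd2]; nlinarith

lemma dd_mul (hc : 0 < c) (j : ℕ) (x : ℝ) :
    dd1 c j x * dd2 c j x = (c + j) ^ 4 + 4 * x ^ 4 := by
  simp only [dd1, dd2]; ring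

/-- The closed form of `tt`. -/
lemma tt_eq (hc : 0 < c) (j : ℕ) (x : ℝ) :
    tt c j x = -(4 * x ^ 2 * ((c + j) ^ 2 + 2 * x ^ 2))
      / ((c + j) * ((c + j) ^ 4 + 4 * x ^ 4)) := by
  have h1 := dd1_pos hc j x
  have h2 := dd2_pos hc j x
  have ha : (0:ℝ) < c + j := by positivity
  have ha' : ((c + j) ^ 4 + 4 * x ^ 4 : ℝ) ≠ 0 := by positivity
  rw [tt, ← dd_mul hc j x]
  simp only [dd1, dd2] at *
  field_simp
  ring


lemma min_mul_le (hc : 0 < c) (j : ℕ) : min 1 c * (j + 1) ≤ c + j := by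
  rcases le_total 1 c with h | h
  · rw [min_eq_left h]
    have : (0:ℝ) ≤ j := Nat.cast_nonneg j
    nlinarith
  · rw [min_eq_right h]
    have : (0:ℝ) ≤ j := Nat.cast_nonneg j
    nlinarith

lemma inv_cube_summable (hc : 0 < c) : Summable (fun j : ℕ => ((c + j) ^ 3)⁻¹) := by
  have hm : 0 < min 1 c := lt_min one_pos hc
  have hbase : Summable (fun j : ℕ => (((j:ℝ) + 1) ^ 3)⁻¹) := by
    have := (summable_nat_add_iff (f := fun n : ℕ => (((n:ℝ)) ^ 3)⁻¹) 1).2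
      (Real.summable_nat_pow_inv.2 (by norm_num))
    refine this.congr fun j => ?_
    push_cast
    ring_nf
  refine Summable.of_nonneg_of_le (fun j => by positivity)
    (fun j => ?_) (hbase.mul_left ((min 1 c) ^ 3)⁻¹)
  have h1 : min 1 c * (j + 1) ≤ c + j := min_mul_le hc j
  have h2 : (0:ℝ) < c + j := by positivity
  have h3 : (min 1 c * (j + 1)) ^ 3 ≤ (c + j) ^ 3 := by
    apply pow_le_pow_left₀ (by positivity) h1
  have h4 : ((c + j) ^ 3)⁻¹ ≤ ((min 1 c * (j + 1)) ^ 3)⁻¹ :=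
    inv_anti₀ (by positivity) h3
  calc ((c + j) ^ 3)⁻¹ ≤ ((min 1 c * ((j:ℝ) + 1)) ^ 3)⁻¹ := h4
    _ = ((min 1 c) ^ 3)⁻¹ * (((j:ℝ) + 1) ^ 3)⁻¹ := by
        rw [mul_pow, mul_inv]

lemma tt_norm_le (hc : 0 < c) {M : ℝ} (j : ℕ) (hx : 0 < x) (hxM : x ≤ M) :
    ‖tt c j x‖ ≤ (4 * M ^ 2 + 8 * M ^ 4 / c ^ 2) * ((c + j) ^ 3)⁻¹ := by
  have ha : (0:ℝ) < c + j := by positivity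
  have hM : 0 < M := hx.trans_le hxM
  have h1 : x ^ 2 ≤ M ^ 2 := by nlinarith
  have h2 : x ^ 4 ≤ M ^ 4 := by nlinarith
  have hcj : c ≤ c + j := le_add_of_nonneg_right (Nat.cast_nonneg j)
  have hc2 : c ^ 2 ≤ (c + j) ^ 2 := by nlinarith
  have h3 : 8 * M ^ 4 * (c + j) ^ 3 ≤ 8 * M ^ 4 / c ^ 2 * (c + j) ^ 5 := by
    rw [div_mul_eq_mul_div, le_div_iff₀ (by positivity)]
    nlinarith [mul_le_mul_of_nonneg_left hc2 (by positivity : (0:ℝ) ≤ 8 * M ^ 4 * (c + j) ^ 3)]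
  rw [Real.norm_eq_abs, tt_eq hc, abs_div, abs_neg,
    abs_of_nonneg (by positivity), abs_of_nonneg (by positivity), ← div_eq_mul_inv,
    div_le_div_iff₀ (by positivity) (by positivity)]
  have t1 : 4 * x ^ 2 * (c + j) ^ 5 ≤ 4 * M ^ 2 * (c + j) ^ 5 := by
    have := mul_le_mul_of_nonneg_right h1 (by positivity : (0:ℝ) ≤ (c + j) ^ 5)
    nlinarith
  have t2 : 8 * x ^ 4 * (c + j) ^ 3 ≤ 8 * M ^ 4 * (c + j) ^ 3 := by
    have := mul_le_mul_of_nonneg_right h2 (by positivity : (0:ℝ) ≤ (c + j) ^ 3)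
    nlinarith
  have t4 : (0:ℝ) ≤ 4 * M ^ 2 * (4 * x ^ 4 * (c + j)) := by positivity
  have t5 : (0:ℝ) ≤ 8 * M ^ 4 / c ^ 2 * (4 * x ^ 4 * (c + j)) := by positivity
  nlinarith [t1, t2, h3, t4, t5]

lemma tt_summable (hc : 0 < c) (hx : 0 < x) : Summable (fun j => tt c j x) := by
  refine Summable.of_norm (Summable.of_nonneg_of_le (fun j => norm_nonneg _)
    (fun j => tt_norm_le hc j hx le_rfl) ?_)
  exact (inv_cube_summable hc).mul_left _

lemma abs_GammaSeq (w : ℂ) (hw : w.im ≠ 0) {n : ℕ} (hn : 1 ≤ n) :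
    Real.log (‖Complex.GammaSeq w n‖) = LL w n := by
  have hn0 : (0:ℝ) < n := by exact_mod_cast hn
  have hne : ∀ j ∈ Finset.range (n + 1), (w + (j:ℂ)) ≠ 0 := by
    intro j _ h
    apply hw
    have := congrArg Complex.im h
    simpa using this
  have habs_ne : ∀ j ∈ Finset.range (n + 1), ‖w + (j:ℂ)‖ ≠ 0 := by
    intro j hj
    simpa using hne j hj
  have habs : ‖(n:ℂ) ^ w‖ = (n:ℝ) ^ w.re := by
    rw [← Complex.ofReal_natCast]
    exact Complex.norm_cpow_eq_rpow_re_of_pos hn0 w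
  have hcpow_ne : ‖(n:ℂ) ^ w‖ ≠ 0 := by
    rw [habs]; exact (Real.rpow_pos_of_pos hn0 _).ne'
  rw [Complex.GammaSeq, norm_div, norm_mul, norm_prod]
  rw [Real.log_div (mul_ne_zero hcpow_ne (by simp [Nat.factorial_ne_zero]))
      (Finset.prod_ne_zero_iff.2 habs_ne)]
  rw [Real.log_mul hcpow_ne (by simp [Nat.factorial_ne_zero])]
  rw [Real.log_prod habs_ne]
  rw [habs, Real.log_rpow hn0]
  simp [LL, Complex.norm_natCast]

lemma LL_tendsto (w : ℂ) (hw : w.im ≠ 0) :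
    Tendsto (fun n => LL w n) atTop (𝓝 ((Complex.log (Complex.Gamma w)).re)) := by
  have hΓ : Complex.Gamma w ≠ 0 := by
    apply Complex.Gamma_ne_zero
    intro m h
    apply hw
    have := congrArg Complex.im h
    simpa using this
  have h1 : Tendsto (fun n => ‖Complex.GammaSeq w n‖) atTop
      (𝓝 (‖Complex.Gamma w‖)) :=
    (continuous_norm.tendsto _).comp (Complex.GammaSeq_tendsto_Gamma w)
  have h2 := h1.log (by simpa using hΓ)
  rw [Complex.log_re]
  refine h2.congr' ?_
  filter_upwards [eventually_ge_atTop 1] with n hn using abs_GammaSeq w hw hn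

lemma abs_zz (hc : 0 < c) (j : ℕ) (x : ℝ) :
    Real.log (‖zz c x + j‖) = Real.log (dd1 c j x) / 2 := by
  have h1 : (‖zz c x + j‖) ^ 2 = dd1 c j x := by
    rw [Complex.sq_norm, Complex.normSq_apply]
    simp only [Complex.add_re, Complex.add_im, zz_re, zz_im, Complex.natCast_re,
      Complex.natCast_im, dd1]
    ring
  have h2 : Real.log (dd1 c j x) = 2 * Real.log (‖zz c x + j‖) := by
    rw [← h1, Real.log_pow]
    norm_num
  rw [h2]; ring

lemma abs_zz' (hc : 0 < c) (j : ℕ) (x : ℝ) :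
    Real.log (‖((2*c : ℝ) : ℂ) - zz c x + j‖) = Real.log (dd2 c j x) / 2 := by
  have h1 : (‖((2*c : ℝ) : ℂ) - zz c x + j‖) ^ 2 = dd2 c j x := by
    rw [Complex.sq_norm, Complex.normSq_apply]
    simp only [Complex.add_re, Complex.add_im, Complex.sub_re, Complex.sub_im, zz_re, zz_im,
      Complex.natCast_re, Complex.natCast_im, Complex.ofReal_re, Complex.ofReal_im, dd2]
    ring
  have h2 : Real.log (dd2 c j x) = 2 * Real.log (‖((2*c : ℝ) : ℂ) - zz c x + j‖) := by
    rw [← h1, Real.log_pow]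
    norm_num
  rw [h2]; ring

lemma FF_eq_LL (hc : 0 < c) (ψ : ℝ) (n : ℕ) (x : ℝ) :
    FF c ψ n x = LL (zz c x) n - LL (((2*c : ℝ) : ℂ) - zz c x) n - 2 * ψ * (c - x) := by
  have hre : (((2*c : ℝ) : ℂ) - zz c x).re = c + x := by
    simp [Complex.sub_re, zz_re]; ring
  rw [FF, LL, LL, hre, zz_re]
  rw [Finset.sum_congr rfl (fun j _ => abs_zz hc j x),
    Finset.sum_congr rfl (fun j _ => abs_zz' hc j x)]
  simp only [← Finset.sum_div, Finset.sum_sub_distrib]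
  ring

lemma FF_tendsto (hc : 0 < c) (ψ : ℝ) (hx : x ≠ 0) :
    Tendsto (fun n => FF c ψ n x) atTop
      (𝓝 ((Complex.log (Complex.Gamma (zz c x))).re
        - (Complex.log (Complex.Gamma (((2*c : ℝ) : ℂ) - zz c x))).re - 2 * ψ * (c - x))) := by
  have h1 : (zz c x).im ≠ 0 := by rw [zz_im]; exact hx
  have h2 : (((2*c : ℝ) : ℂ) - zz c x).im ≠ 0 := by
    simp only [Complex.sub_im, zz_im, Complex.ofReal_im]
    simpa using hx
  simp_rw [FF_eq_LL hc ψ]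
  exact ((LL_tendsto _ h1).sub (LL_tendsto _ h2)).sub_const _


lemma FF_hasDeriv (hc : 0 < c) (ψ : ℝ) (n : ℕ) (x : ℝ) :
    HasDerivAt (FF c ψ n) (AA c ψ n x) x := by
  have hlog : HasDerivAt (fun y : ℝ => (-2 * y) * Real.log n) (-2 * Real.log n) x := by
    have h2 := ((hasDerivAt_id x).const_mul (-2 : ℝ)).mul_const (Real.log n)
    simpa using h2
  have hsum : HasDerivAt
      (fun y => ∑ j ∈ Finset.range (n+1), (Real.log (dd1 c j y) - Real.log (dd2 c j y)) / 2)
      (∑ j ∈ Finset.range (n+1),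
        ((2*(c+j-x)*(-1) + 2*x)/dd1 c j x - (2*(c+j+x)*1 + 2*x)/dd2 c j x)/2) x := by
    apply HasDerivAt.fun_sum
    intro j _
    have h1 : HasDerivAt (fun y : ℝ => c + ↑j - y) (-1 : ℝ) x := by
      simpa using (hasDerivAt_id x).const_sub (c + (j:ℝ))
    have h1' : HasDerivAt (fun y : ℝ => c + ↑j + y) (1 : ℝ) x := by
      simpa using (hasDerivAt_id x).const_add (c + (j:ℝ))
    have hD1 : HasDerivAt (fun y => dd1 c j y) (2*(c+j-x)*(-1) + 2*x) x := by
      have := (h1.fun_pow 2).fun_add (hasDerivAt_pow 2 x)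
      simp only [dd1]
      refine this.congr_deriv ?_
      push_cast
      ring
    have hD2 : HasDerivAt (fun y => dd2 c j y) (2*(c+j+x)*1 + 2*x) x := by
      have := (h1'.fun_pow 2).fun_add (hasDerivAt_pow 2 x)
      simp only [dd2]
      refine this.congr_deriv ?_
      push_cast
      ring
    exact ((hD1.log (dd1_pos hc j x).ne').sub (hD2.log (dd2_pos hc j x).ne')).div_const 2
  have hψ' : HasDerivAt (fun y : ℝ => 2 * ψ * (c - y)) (2 * ψ * (0 - 1)) x :=
    ((hasDerivAt_const x c).sub (hasDerivAt_id x)).const_mul (2*ψ)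
  have total := (hlog.fun_sub hsum).fun_sub hψ'
  have hfun : FF c ψ n = fun y => (-2 * y) * Real.log n
      - (∑ j ∈ Finset.range (n+1), (Real.log (dd1 c j y) - Real.log (dd2 c j y)) / 2)
      - 2 * ψ * (c - y) := rfl
  rw [hfun]
  refine total.congr_deriv ?_
  have hterm : ∀ j ∈ Finset.range (n+1), tt c j x + 2 * (1/(c+j)) =
      -(((2*(c+j-x)*(-1) + 2*x)/dd1 c j x - (2*(c+j+x)*1 + 2*x)/dd2 c j x)/2) := by
    intro j _
    rw [tt]
    ring
  have hs := Finset.sum_congr rfl hterm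
  rw [Finset.sum_add_distrib, Finset.sum_neg_distrib] at hs
  rw [AA, ee, Finset.mul_sum]
  have h2 : ∀ j ∈ Finset.range (n+1), 2 * (1/(c+(j:ℝ))) = 2 * (c+(j:ℝ))⁻¹ := by
    intro j _; rw [one_div]
  linarith [hs]


lemma digamma_summand_summable (hc : 0 < c) :
    Summable (fun n : ℕ => 1 / ((n:ℝ) + 1) - 1 / ((n:ℝ) + c)) := by
  have hm : 0 < min 1 c := lt_min one_pos hc
  have hbase : Summable (fun j : ℕ => (((j:ℝ) + 1) ^ 2)⁻¹) := by
    have := (summable_nat_add_iff (f := fun n : ℕ => (((n:ℝ)) ^ 2)⁻¹) 1).2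
      (Real.summable_nat_pow_inv.2 (by norm_num))
    refine this.congr fun j => ?_
    push_cast
    ring_nf
  apply Summable.of_norm
  refine Summable.of_nonneg_of_le (fun j => norm_nonneg _) (fun j => ?_)
    ((hbase.mul_left (|c - 1| * (min 1 c)⁻¹)))
  have hj1 : (0:ℝ) < (j:ℝ) + 1 := by positivity
  have hjc : (0:ℝ) < (j:ℝ) + c := by positivity
  have heq : 1 / ((j:ℝ) + 1) - 1 / ((j:ℝ) + c) = (c - 1) / (((j:ℝ) + 1) * ((j:ℝ) + c)) := by
    field_simp
    ring
  rw [Real.norm_eq_abs, heq, abs_div,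
    abs_of_pos (show (0:ℝ) < ((j:ℝ)+1)*((j:ℝ)+c) by positivity)]
  have hlow : min 1 c * ((j:ℝ) + 1) ≤ (j:ℝ) + c := by
    rcases le_total 1 c with h | h
    · rw [min_eq_left h]
      have : (0:ℝ) ≤ j := Nat.cast_nonneg j
      nlinarith
    · rw [min_eq_right h]
      have : (0:ℝ) ≤ j := Nat.cast_nonneg j
      nlinarith
  have hkey : ((j:ℝ) + 1) * (min 1 c * ((j:ℝ) + 1)) ≤ ((j:ℝ) + 1) * ((j:ℝ) + c) :=
    mul_le_mul_of_nonneg_left hlow (by positivity)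
  calc |c - 1| / (((j:ℝ) + 1) * ((j:ℝ) + c))
      ≤ |c - 1| / (((j:ℝ) + 1) * (min 1 c * ((j:ℝ) + 1))) := by
        apply div_le_div_of_nonneg_left (abs_nonneg _) (by positivity) hkey
    _ = |c - 1| * (min 1 c)⁻¹ * (((j:ℝ) + 1) ^ 2)⁻¹ := by
        rw [div_eq_mul_inv,
          show ((j:ℝ)+1)*(min 1 c*((j:ℝ)+1)) = (min 1 c)*((j:ℝ)+1)^2 by ring, mul_inv]
        ring

lemma harmonic_cast (n : ℕ) : ((harmonic n : ℚ) : ℝ) = ∑ j ∈ Finset.range n, 1 / ((j:ℝ) + 1) := by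
  rw [harmonic]
  push_cast
  refine Finset.sum_congr rfl fun j _ => ?_
  rw [one_div]

lemma log_succ_sub_tendsto :
    Tendsto (fun n : ℕ => Real.log (n + 1) - Real.log n) atTop (𝓝 0) := by
  have h1 : Tendsto (fun n : ℕ => 1 + (n:ℝ)⁻¹) atTop (𝓝 1) := by
    simpa using tendsto_const_nhds.add (tendsto_inv_atTop_nhds_zero_nat (𝕜 := ℝ))
  have h2 := h1.log one_ne_zero
  rw [Real.log_one] at h2
  refine h2.congr' ?_
  filter_upwards [eventually_ge_atTop 1] with n hn
  have hn0 : (0:ℝ) < n := by exact_mod_cast hn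
  rw [show (1:ℝ) + (n:ℝ)⁻¹ = ((n:ℝ) + 1) / n by field_simp]
  rw [Real.log_div (by positivity) hn0.ne']

lemma ee_tendsto (hc : 0 < c) : Tendsto (fun n => ee c (digamma c) n) atTop (𝓝 0) := by
  set S : ℝ := ∑' n : ℕ, (1 / ((n:ℝ) + 1) - 1 / ((n:ℝ) + c)) with hS
  have hdig : digamma c = -Real.eulerMascheroniConstant + S := rfl
  have hsum := digamma_summand_summable hc
  have hpart : Tendsto (fun n => ∑ j ∈ Finset.range (n+1), (1 / ((j:ℝ) + 1) - 1 / ((j:ℝ) + c)))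
      atTop (𝓝 S) := by
    have := hsum.hasSum.tendsto_sum_nat
    exact this.comp (tendsto_add_atTop_nat 1)
  have hharm : Tendsto (fun n : ℕ => ((harmonic (n+1) : ℚ) : ℝ) - Real.log (n+1)) atTop
      (𝓝 Real.eulerMascheroniConstant) := by
    have := Real.tendsto_harmonic_sub_log.comp (tendsto_add_atTop_nat 1)
    refine this.congr fun n => ?_
    simp [Function.comp]
  have hlog := log_succ_sub_tendsto
  have key : Tendsto (fun n : ℕ =>
      (((harmonic (n+1) : ℚ) : ℝ) - Real.log (n+1)) + (Real.log (n+1) - Real.log n)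
        - (∑ j ∈ Finset.range (n+1), (1 / ((j:ℝ) + 1) - 1 / ((j:ℝ) + c)))
        - Real.eulerMascheroniConstant + S) atTop (𝓝 0) := by
    have := (((hharm.add hlog).sub hpart).sub_const Real.eulerMascheroniConstant).add_const S
    convert this using 2
    ring
  have := key.const_mul 2
  rw [mul_zero] at this
  refine this.congr fun n => ?_
  rw [ee, hdig, harmonic_cast]
  have hsplit : ∑ j ∈ Finset.range (n+1), 1 / (c + (j:ℝ))
      = ∑ j ∈ Finset.range (n+1), 1 / ((j:ℝ) + 1)
        - ∑ j ∈ Finset.range (n+1), (1 / ((j:ℝ) + 1) - 1 / ((j:ℝ) + c)) := by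
    rw [← Finset.sum_sub_distrib]
    refine Finset.sum_congr rfl fun j _ => ?_
    rw [add_comm c (j:ℝ)]
    ring
  rw [hsplit]
  push_cast
  ring


lemma AA_tlu (hc : 0 < c) :
    TendstoLocallyUniformlyOn (fun n => AA c (digamma c) n) (fun y => TT c y) atTop
      (Set.Ioi (0:ℝ)) := by
  rw [tendstoLocallyUniformlyOn_iff_forall_isCompact isOpen_Ioi]
  intro K hK hKc
  rcases K.eq_empty_or_nonempty with rfl | hne
  · simp [TendstoUniformlyOn]
  obtain ⟨M, hMK, hM'⟩ := hKc.exists_isMaxOn hne continuous_id.continuousOn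
  have hM : ∀ y ∈ K, y ≤ M := fun y hy => hM' hy
  have hM0 : 0 < M := hK hMK
  have hTU : TendstoUniformlyOn (fun N y => ∑ j ∈ Finset.range N, tt c j y)
      (fun y => TT c y) atTop K := by
    apply tendstoUniformlyOn_tsum_nat ((inv_cube_summable hc).mul_left (4*M^2 + 8*M^4/c^2))
    intro j y hy
    exact tt_norm_le hc j (hK hy) (hM y hy)
  have hTU' : TendstoUniformlyOn (fun N y => ∑ j ∈ Finset.range (N+1), tt c j y)
      (fun y => TT c y) atTop K := by
    intro u hu
    exact (tendsto_add_atTop_nat 1).eventually (hTU u hu)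
  have hee := ee_tendsto hc
  rw [Metric.tendstoUniformlyOn_iff] at hTU' ⊢
  intro ε hε
  have h2 : ∀ᶠ n in atTop, |ee c (digamma c) n| < ε/2 := by
    have := (Metric.tendsto_nhds.1 hee) (ε/2) (half_pos hε)
    filter_upwards [this] with n hn
    simpa [Real.dist_eq] using hn
  filter_upwards [hTU' (ε/2) (half_pos hε), h2] with n hn1 hn2 y hy
  have := hn1 y hy
  rw [Real.dist_eq] at this ⊢
  rw [AA]
  have : |TT c y - (∑ j ∈ Finset.range (n+1), tt c j y + ee c (digamma c) n)|
      ≤ |TT c y - ∑ j ∈ Finset.range (n+1), tt c j y| + |ee c (digamma c) n| := by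
    calc |TT c y - (∑ j ∈ Finset.range (n+1), tt c j y + ee c (digamma c) n)|
        = |(TT c y - ∑ j ∈ Finset.range (n+1), tt c j y) + (-(ee c (digamma c) n))| := by
          ring_nf
      _ ≤ |TT c y - ∑ j ∈ Finset.range (n+1), tt c j y| + |(-(ee c (digamma c) n))| :=
          abs_add_le _ _
      _ = _ := by rw [abs_neg]
  have h3 := hn1 y hy
  rw [Real.dist_eq] at h3
  linarith [this, h3, hn2]

lemma TT_le (hc : 0 < c) {r : ℝ} (hr : 0 < r) : TT c r ≤ -2 * r^2 / (1 + c + 2*r)^2 := by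
  set b : ℝ := c + 2*r with hb
  have hb0 : 0 < b := by positivity
  set g : ℕ → ℝ := fun k => 2*r^2 / ((k:ℝ) + b)^2 with hg
  have hg0 : Tendsto g atTop (𝓝 0) := by
    have h1 : Tendsto (fun k : ℕ => (k:ℝ) + b) atTop atTop :=
      tendsto_atTop_add_const_right _ b tendsto_natCast_atTop_atTop
    have h2 : Tendsto (fun k : ℕ => ((k:ℝ) + b)^2) atTop atTop :=
      (tendsto_pow_atTop (two_ne_zero)).comp h1
    have h3 := h2.inv_tendsto_atTop
    have h4 := h3.const_mul (2*r^2)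
    rw [mul_zero] at h4
    refine h4.congr fun k => ?_
    simp [hg, div_eq_mul_inv, Function.comp]
  have hmono : ∀ k : ℕ, 0 ≤ g k - g (k+1) := by
    intro k
    have h1 : ((k:ℝ) + b)^2 ≤ (((k:ℕ)+1:ℕ):ℝ) ^ 0 * ((k+1:ℝ) + b)^2 := by
      push_cast
      nlinarith [Nat.cast_nonneg (α := ℝ) k]
    have : g (k+1) ≤ g k := by
      apply div_le_div_of_nonneg_left (by positivity) (by positivity)
      push_cast
      nlinarith [Nat.cast_nonneg (α := ℝ) k]
    linarith
  have hsum : HasSum (fun k => g k - g (k+1)) (g 0) := by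
    rw [hasSum_iff_tendsto_nat_of_nonneg hmono]
    have : ∀ n : ℕ, ∑ i ∈ Finset.range n, (g i - g (i+1)) = g 0 - g n :=
      fun n => Finset.sum_range_sub' g n
    simp_rw [this]
    simpa using tendsto_const_nhds.sub hg0
  have hterm : ∀ k : ℕ, tt c k r ≤ -(g k - g (k+1)) := by
    intro k
    have ha : (0:ℝ) < c + k := by positivity
    have hy : (0:ℝ) < (k:ℝ) + b := by positivity
    have hy1 : (0:ℝ) < (k:ℝ) + 1 + b := by positivity
    rw [tt_eq hc, hg, neg_sub]
    push_cast
    rw [div_sub_div _ _ (by positivity : (((k:ℝ)+1) + b)^2 ≠ 0) (by positivity : ((k:ℝ) + b)^2 ≠ 0)]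
    rw [div_le_div_iff₀ (by positivity) (by positivity)]
    set a : ℝ := c + (k:ℝ) with hadef
    set y : ℝ := (k:ℝ) + b with hydef
    have e1 : y = a + 2*r := by rw [hydef, hadef, hb]; ring
    have h1 : a^4 + 4*r^4 ≤ (a^2+2*r^2)^2 := by nlinarith [sq_nonneg (a*r)]
    have h2 : a^2 + 2*r^2 ≤ y^2 := by rw [e1]; nlinarith [mul_pos ha hr]
    have h3 : a ≤ y := by rw [e1]; linarith
    have hy' : (0:ℝ) < y := hy
    have p1 : a*(a^4+4*r^4) ≤ a*((a^2+2*r^2)^2) := mul_le_mul_of_nonneg_left h1 ha.le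
    have p2 : a*((a^2+2*r^2)^2) ≤ y*((a^2+2*r^2)^2) :=
      mul_le_mul_of_nonneg_right h3 (by positivity)
    have p3 : (a^2+2*r^2)^2 ≤ (a^2+2*r^2)*y^2 := by
      nlinarith [mul_nonneg (by positivity : (0:ℝ) ≤ a^2+2*r^2) (sub_nonneg.2 h2)]
    have q : a*(a^4+4*r^4) ≤ y*((a^2+2*r^2)*y^2) := by
      have := mul_le_mul_of_nonneg_left p3 hy'.le
      linarith
    have h4 : (2*y+1)*y ≤ 2*(y+1)^2 := by nlinarith
    have m1 := mul_le_mul_of_nonneg_left q (by positivity : (0:ℝ) ≤ 2*r^2*(2*y+1))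
    have m2 := mul_le_mul_of_nonneg_left h4
      (by positivity : (0:ℝ) ≤ 2*r^2*((a^2+2*r^2)*y^2))
    have hgoal : (↑k + 1 + b) = y + 1 := by rw [hydef]; ring
    rw [hgoal]
    nlinarith [m1, m2]
  have hsumtt := tt_summable hc hr
  have hle := Summable.tsum_le_tsum hterm hsumtt hsum.neg.summable
  rw [hsum.neg.tsum_eq] at hle
  have hg0' : g 0 = 2*r^2 / b^2 := by simp [hg]
  rw [TT]
  calc (∑' j : ℕ, tt c j r) ≤ -(g 0) := hle
    _ = -(2*r^2) / b^2 := by rw [hg0']; ring_nf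
    _ ≤ -(2*r^2) / (1 + c + 2*r)^2 := by
        rw [neg_div, neg_div, neg_le_neg_iff]
        apply div_le_div_of_nonneg_left (by positivity) (by positivity)
        nlinarith
    _ = -2 * r^2 / (1 + c + 2*r)^2 := by ring_nf

end Stmt8

theorem stmt8 (θ : ℝ) (hθ : 0 < θ) (G : ℂ → ℂ)
    (hG : ∀ z, G z = Complex.log (Complex.Gamma z) - Complex.log (Complex.Gamma (θ - z))
        - 2 * (digamma (θ / 2) : ℂ) * z)
    (r : ℝ) (hr : 0 < r) :
    deriv (fun r : ℝ => (G ((θ / 2 : ℝ) + (r : ℂ) * (-1 + Complex.I))).re) r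
      ≤ -2 * r ^ 2 / (1 + θ / 2 + 2 * r) ^ 2 := by
  have hc : 0 < θ/2 := by linarith
  have key : HasDerivAt (fun x : ℝ => (G ((θ / 2 : ℝ) + (x : ℂ) * (-1 + Complex.I))).re)
      (Stmt8.TT (θ/2) r) r := by
    apply hasDerivAt_of_tendstoLocallyUniformlyOn isOpen_Ioi (Stmt8.AA_tlu hc)
      (Filter.Eventually.of_forall fun n x _ => Stmt8.FF_hasDeriv hc (digamma (θ/2)) n x)
      ?_ (Set.mem_Ioi.2 hr)
    intro x hx
    have hx0 : x ≠ 0 := ne_of_gt hx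
    have h := Stmt8.FF_tendsto hc (digamma (θ/2)) hx0
    have hzz : ((θ/2:ℝ):ℂ) + (x:ℂ)*(-1+Complex.I) = Stmt8.zz (θ/2) x := rfl
    have hre : (Stmt8.zz (θ/2) x).re = θ/2 - x := Stmt8.zz_re _ _
    have hz : ((2*(θ/2) : ℝ) : ℂ) = (θ:ℂ) := by push_cast; ring
    have h2 : (Complex.log (Complex.Gamma (Stmt8.zz (θ/2) x))
        - Complex.log (Complex.Gamma ((θ:ℂ) - Stmt8.zz (θ/2) x))
        - 2 * ((digamma (θ/2) : ℝ) : ℂ) * Stmt8.zz (θ/2) x).re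
        = (Complex.log (Complex.Gamma (Stmt8.zz (θ/2) x))).re
          - (Complex.log (Complex.Gamma (((2*(θ/2) : ℝ) : ℂ) - Stmt8.zz (θ/2) x))).re
          - 2 * digamma (θ/2) * (θ/2 - x) := by
      rw [hz]
      simp only [Complex.sub_re, Complex.mul_re, Complex.mul_im, Complex.ofReal_re,
        Complex.ofReal_im, Complex.re_ofNat, Complex.im_ofNat, hre]
      ring
    simp only [hG, hzz, h2]
    exact h
  rw [key.deriv]
  exact Stmt8.TT_le hc hr
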